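/- Under the same hypotheses on W, the L^p norm of W satisfies ∫₀¹ W(x)^p dx = sqrt(2(p+1)) * ξ^((p+1)/2) * M_p, where M_p = ∫₀¹ s^p/sqrt(1-s^(p+1)) ds. -/

import Mathlib

open Real Set

theorem stmt4 (p : ℝ) (hp : 1 < p) (W W' : ℝ → ℝ) (ξ : ℝ)
    (hW' : ∀ x ∈ Icc (0:ℝ) 1, HasDerivAt W (W' x) x)
    (hpos : ∀ x ∈ Ioo (0:ℝ) 1, 0 < W x)
    (hb0 : W 0 = 0) (hb1 : W 1 = 0)
    (hsym : ∀ x ∈ Icc (0:ℝ) (1/2), W x = W (1 - x))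
    (hξ : ξ = W (1/2)) (hmax : ∀ x ∈ Icc (0:ℝ) 1, W x ≤ ξ)
    (hmono : ∀ x ∈ Ico (0:ℝ) (1/2), 0 < W' x)
    (hderiv : ∀ x ∈ Icc (0:ℝ) (1/2),
      W' x = Real.sqrt ((2/(p+1)) * (ξ ^ (p+1) - (W x) ^ (p+1)))) :
    ∫ x in (0:ℝ)..1, (W x) ^ p =
      Real.sqrt (2*(p+1)) * ξ ^ ((p+1)/2) *
        (∫ s in (0:ℝ)..1, s ^ p / Real.sqrt (1 - s ^ (p+1))) := by
  have hp1 : (0:ℝ) < p + 1 := by linarith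
  set c : ℝ := 2 / (p + 1) with hc_def
  have hc : 0 < c := by positivity
  have ξpos : 0 < ξ := by
    rw [hξ]; exact hpos (1/2) (by norm_num)
  set g : ℝ → ℝ := fun u => u ^ p / Real.sqrt (c * (ξ ^ (p+1) - u ^ (p+1))) with hg_def
  have contW : ContinuousOn W (Icc 0 1) := fun x hx =>
    (hW' x hx).continuousAt.continuousWithinAt
  have hsub : Icc (0:ℝ) (1/2) ⊆ Icc 0 1 := Icc_subset_Icc le_rfl (by norm_num)
  -- strict monotonicity on [0,1/2]
  have hstrict : StrictMonoOn W (Icc 0 (1/2)) := by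
    apply strictMonoOn_of_deriv_pos (convex_Icc 0 (1/2)) (contW.mono hsub)
    intro x hx
    rw [interior_Icc] at hx
    have hx1 : x ∈ Icc (0:ℝ) 1 := ⟨hx.1.le, by linarith [hx.2]⟩
    rw [(hW' x hx1).deriv]
    exact hmono x ⟨hx.1.le, hx.2⟩
  -- image of (0,1/2) under W
  have himg : W '' Ioo 0 (1/2) = Ioo 0 ξ := by
    apply Subset.antisymm
    · rintro _ ⟨x, hx, rfl⟩
      constructor
      · have := hstrict ⟨le_rfl, by norm_num⟩ ⟨hx.1.le, hx.2.le⟩ hx.1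
        rwa [hb0] at this
      · have := hstrict ⟨hx.1.le, hx.2.le⟩ ⟨by norm_num, le_rfl⟩ hx.2
        rwa [← hξ] at this
    · have h := intermediate_value_Ioo (by norm_num : (0:ℝ) ≤ 1/2) (contW.mono hsub)
      rwa [hb0, ← hξ] at h
  -- pointwise positivity of W on (0,1/2) deriv
  -- change of variables: ∫_{(0,1/2)} W^p = ∫_{(0,ξ)} g
  have key1 : ∫ u in Ioo 0 ξ, g u = ∫ x in Ioo 0 (1/2), (W x) ^ p := by
    have hW'w : ∀ x ∈ Ioo (0:ℝ) (1/2), HasDerivWithinAt W (W' x) (Ioo 0 (1/2)) x :=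
      fun x hx => (hW' x ⟨hx.1.le, by linarith [hx.2]⟩).hasDerivWithinAt
    have hinj : InjOn W (Ioo 0 (1/2)) := hstrict.injOn.mono Ioo_subset_Icc_self
    have := MeasureTheory.integral_image_eq_integral_abs_deriv_smul
      measurableSet_Ioo hW'w hinj g
    rw [himg] at this
    rw [this]
    apply MeasureTheory.setIntegral_congr_fun measurableSet_Ioo
    intro x hx
    have hx2 : x ∈ Icc (0:ℝ) (1/2) := ⟨hx.1.le, hx.2.le⟩
    have hW'pos : 0 < W' x := hmono x ⟨hx.1.le, hx.2⟩
    simp only [smul_eq_mul, abs_of_pos hW'pos, hg_def]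
    rw [← hderiv x hx2]
    field_simp
  -- change of variables: ∫_{(0,ξ)} g = ∫_{(0,1)} |ξ| * g(ξ s)
  have key2 : ∫ u in Ioo 0 ξ, g u = ∫ s in Ioo (0:ℝ) 1, |ξ| • g (ξ * s) := by
    have hder : ∀ s ∈ Ioo (0:ℝ) 1,
        HasDerivWithinAt (fun s => ξ * s) ξ (Ioo (0:ℝ) 1) s := fun s _ => by
      simpa using ((hasDerivAt_id s).const_mul ξ).hasDerivWithinAt
    have hinj : InjOn (fun s => ξ * s) (Ioo (0:ℝ) 1) := fun a _ b _ h =>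
      mul_left_cancel₀ ξpos.ne' h
    have h := MeasureTheory.integral_image_eq_integral_abs_deriv_smul
      measurableSet_Ioo hder hinj g
    have himg2 : (fun s => ξ * s) '' Ioo (0:ℝ) 1 = Ioo 0 ξ := by
      have := image_mul_left_Ioo ξpos (0:ℝ) 1
      simpa using this
    rw [himg2] at h
    exact h
  -- pointwise computation on (0,1)
  set K : ℝ := Real.sqrt (2*(p+1)) * ξ ^ ((p+1)/2) / 2 with hK_def
  have hpt : ∀ s ∈ Ioo (0:ℝ) 1,
      |ξ| • g (ξ * s) = K * (s ^ p / Real.sqrt (1 - s ^ (p+1))) := by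
    intro s hs
    have hs0 : 0 < s := hs.1
    have hs1 : s < 1 := hs.2
    have h1 : (0:ℝ) < 1 - s ^ (p+1) := by
      have := Real.rpow_lt_one hs0.le hs1 hp1
      linarith
    have hsqrtξ : Real.sqrt (ξ ^ (p+1)) = ξ ^ ((p+1)/2) := by
      rw [show (p+1)/2 = (p+1) * (1/2) by ring, Real.rpow_mul ξpos.le,
        ← Real.sqrt_eq_rpow]
    have e1 : Real.sqrt (c * (ξ ^ (p+1) - (ξ * s) ^ (p+1)))
        = Real.sqrt c * ξ ^ ((p+1)/2) * Real.sqrt (1 - s ^ (p+1)) := by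
      rw [Real.mul_rpow ξpos.le hs0.le,
        show c * (ξ ^ (p+1) - ξ ^ (p+1) * s ^ (p+1))
          = c * ξ ^ (p+1) * (1 - s ^ (p+1)) by ring,
        Real.sqrt_mul (by positivity), Real.sqrt_mul hc.le, hsqrtξ]
    have e2 : (ξ * s) ^ p = ξ ^ p * s ^ p := Real.mul_rpow ξpos.le hs0.le
    have hA : (0:ℝ) < ξ ^ ((p+1)/2) := Real.rpow_pos_of_pos ξpos _
    have hS : (0:ℝ) < Real.sqrt (1 - s ^ (p+1)) := Real.sqrt_pos.mpr h1
    have hsc : (0:ℝ) < Real.sqrt c := Real.sqrt_pos.mpr hc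
    have hξp : ξ * ξ ^ p = ξ ^ ((p+1)/2) * ξ ^ ((p+1)/2) := by
      rw [← Real.rpow_add ξpos, show (p+1)/2 + (p+1)/2 = p + 1 by ring,
        Real.rpow_add ξpos, Real.rpow_one, mul_comm]
    have hst2 : Real.sqrt (2*(p+1)) = 2 / Real.sqrt c := by
      rw [eq_div_iff hsc.ne', ← Real.sqrt_mul (by positivity),
        show 2*(p+1) * c = 4 by rw [hc_def]; field_simp; ring,
        show (4:ℝ) = 2^2 by norm_num, Real.sqrt_sq (by norm_num : (0:ℝ) ≤ 2)]
    simp only [smul_eq_mul, hg_def, abs_of_pos ξpos, hK_def, e1, e2, hst2]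
    field_simp
    linear_combination hξp
  -- symmetry: ∫_0^1 = 2 ∫_0^{1/2}
  have contWp : ContinuousOn (fun x => W x ^ p) (Icc 0 1) :=
    contW.rpow_const (fun x _ => Or.inr (by linarith))
  have I1 : IntervalIntegrable (fun x => W x ^ p) MeasureTheory.volume 0 (1/2) := by
    apply ContinuousOn.intervalIntegrable
    apply contWp.mono
    rw [uIcc_of_le (by norm_num)]
    exact hsub
  have I2 : IntervalIntegrable (fun x => W x ^ p) MeasureTheory.volume (1/2) 1 := by
    apply ContinuousOn.intervalIntegrable
    apply contWp.mono
    rw [uIcc_of_le (by norm_num)]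
    exact Icc_subset_Icc (by norm_num) le_rfl
  have hsplit : ∫ x in (0:ℝ)..1, (W x) ^ p
      = (∫ x in (0:ℝ)..(1/2), (W x) ^ p) + ∫ x in (1/2:ℝ)..1, (W x) ^ p :=
    (intervalIntegral.integral_add_adjacent_intervals I1 I2).symm
  have hsec : ∫ x in (1/2:ℝ)..1, (W x) ^ p = ∫ x in (0:ℝ)..(1/2), (W x) ^ p := by
    have h1 : (∫ x in (0:ℝ)..(1/2), (W (1 - x)) ^ p)
        = ∫ x in (1-(1/2):ℝ)..(1-0:ℝ), (W x) ^ p :=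
      intervalIntegral.integral_comp_sub_left (fun x => (W x) ^ p) 1
    have h2 : (∫ x in (0:ℝ)..(1/2), (W x) ^ p)
        = ∫ x in (0:ℝ)..(1/2), (W (1 - x)) ^ p := by
      apply intervalIntegral.integral_congr
      intro x hx
      rw [uIcc_of_le (by norm_num)] at hx
      show W x ^ p = W (1 - x) ^ p
      rw [hsym x hx]
    rw [← h2] at h1
    norm_num at h1
    exact h1.symm
  -- assemble
  have hhalf : ∫ x in (0:ℝ)..(1/2), (W x) ^ p
      = K * ∫ s in (0:ℝ)..1, s ^ p / Real.sqrt (1 - s ^ (p+1)) := by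
    rw [intervalIntegral.integral_of_le (by norm_num : (0:ℝ) ≤ 1/2),
      MeasureTheory.integral_Ioc_eq_integral_Ioo, ← key1, key2,
      MeasureTheory.setIntegral_congr_fun measurableSet_Ioo hpt,
      MeasureTheory.integral_const_mul,
      intervalIntegral.integral_of_le (by norm_num : (0:ℝ) ≤ 1),
      MeasureTheory.integral_Ioc_eq_integral_Ioo]
  rw [hsplit, hsec, hhalf, hK_def]
  ring
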